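/- Define F(x)_i = f_+((β/γ)(Ax)_i) with f_+(y) = y/(1+y), where A is n×n nonnegative and β, γ > 0. If βρ(A)/γ < 1, then the only fixed point of F in [0,1]^n is 0. (Proof idea: F(x) ≤ (β/γ)Ax entrywise and monotonicity give F^k(x) ≤ ((β/γ)A)^k x → 0 by Schur stability.) -/

import Mathlib

open scoped ENNReal

/-- The spectral radius of a real matrix: the spectral radius of its
complexification. -/
noncomputable def specRad {n : ℕ} (A : Matrix (Fin n) (Fin n) ℝ) : ℝ :=
  (spectralRadius ℂ (A.map (Complex.ofReal : ℝ → ℂ))).toReal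

open scoped Matrix
attribute [local instance] Matrix.linftyOpNormedRing Matrix.linftyOpNormedAlgebra

/-- Define F(x)_i = f₊((β/γ)(Ax)_i) with f₊(y) = y/(1+y), A n×n
nonnegative, β, γ > 0. If βρ(A)/γ < 1, then the only fixed point of F in [0,1]^n
is 0. -/
theorem network_SIS_unique_fixed_point_below_threshold
    {n : ℕ} (A : Matrix (Fin n) (Fin n) ℝ)
    (hA : ∀ i j, 0 ≤ A i j)
    (β γ : ℝ) (hβ : 0 < β) (hγ : 0 < γ)
    (hthr : β * specRad A / γ < 1) :
    ∀ x : Fin n → ℝ, (∀ i, x i ∈ Set.Icc (0:ℝ) 1) →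
      (∀ i, (β / γ * ∑ j, A i j * x j) / (1 + β / γ * ∑ j, A i j * x j) = x i) →
      x = 0 := by
  intro x hx hfix
  rcases Nat.eq_zero_or_pos n with hn | hn
  · subst hn; funext i; exact i.elim0
  haveI : Nonempty (Fin n) := ⟨⟨0, hn⟩⟩
  have hβγ : 0 < β / γ := div_pos hβ hγ
  have hx0 : ∀ i, 0 ≤ x i := fun i => (hx i).1
  -- entrywise key inequality
  have hstep : ∀ i, x i ≤ β / γ * (A *ᵥ x) i := by
    intro i
    have hy : 0 ≤ β / γ * ∑ j, A i j * x j :=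
      mul_nonneg hβγ.le (Finset.sum_nonneg fun j _ => mul_nonneg (hA i j) (hx0 j))
    have h1 : (β / γ * ∑ j, A i j * x j) / (1 + β / γ * ∑ j, A i j * x j)
        ≤ β / γ * ∑ j, A i j * x j := div_le_self hy (by linarith)
    have : (A *ᵥ x) i = ∑ j, A i j * x j := by
      simp [Matrix.mulVec, dotProduct]
    rw [this, ← hfix i]
    exact h1
  -- iterate
  have hiter : ∀ k, ∀ i, x i ≤ (β / γ) ^ k * ((A ^ k) *ᵥ x) i := by
    intro k
    induction k with
    | zero => intro i; simp [Matrix.one_mulVec]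
    | succ k ih =>
      intro i
      have h2 : (A *ᵥ x) i ≤ (β / γ) ^ k * ((A * A ^ k) *ᵥ x) i := by
        have : ∀ j, A i j * x j ≤ A i j * ((β / γ) ^ k * ((A ^ k) *ᵥ x) j) :=
          fun j => mul_le_mul_of_nonneg_left (ih j) (hA i j)
        have hsum : (A *ᵥ x) i ≤ ∑ j, A i j * ((β / γ) ^ k * ((A ^ k) *ᵥ x) j) := by
          simpa [Matrix.mulVec, dotProduct] using
            Finset.sum_le_sum (fun j _ => this j)
        calc (A *ᵥ x) i ≤ ∑ j, A i j * ((β / γ) ^ k * ((A ^ k) *ᵥ x) j) := hsum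
          _ = (β / γ) ^ k * (A *ᵥ ((A ^ k) *ᵥ x)) i := by
              simp only [Matrix.mulVec, dotProduct, Finset.mul_sum]
              exact Finset.sum_congr rfl fun j _ => Finset.sum_congr rfl fun l _ => by ring
          _ = (β / γ) ^ k * ((A * A ^ k) *ᵥ x) i := by rw [← Matrix.mulVec_mulVec]
      calc x i ≤ β / γ * (A *ᵥ x) i := hstep i
        _ ≤ β / γ * ((β / γ) ^ k * ((A * A ^ k) *ᵥ x) i) :=
            mul_le_mul_of_nonneg_left h2 hβγ.le
        _ = (β / γ) ^ (k + 1) * ((A ^ (k + 1)) *ᵥ x) i := by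
            rw [pow_succ (β / γ) k, ← pow_succ' A k]; ring
  -- spectral radius bound via Gelfand's formula
  set B : Matrix (Fin n) (Fin n) ℂ := A.map (Complex.ofReal : ℝ → ℂ) with hB
  have hρfin : spectralRadius ℂ B ≠ ⊤ :=
    (lt_of_le_of_lt (spectrum.spectralRadius_le_nnnorm (𝕜 := ℂ) (a := B))
      ENNReal.coe_lt_top).ne
  have hρlt : specRad A < γ / β := by
    have hβρ : β * specRad A < γ := by
      have := (div_lt_one hγ).mp hthr
      linarith
    rw [lt_div_iff₀' hβ]
    exact hβρ
  have hlt : spectralRadius ℂ B < ENNReal.ofReal (γ / β) := by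
    rw [ENNReal.lt_ofReal_iff_toReal_lt hρfin]
    exact hρlt
  have hGel := spectrum.pow_nnnorm_pow_one_div_tendsto_nhds_spectralRadius B
  have hev : ∀ᶠ k : ℕ in Filter.atTop,
      (‖B ^ k‖₊ : ℝ≥0∞) ^ (1 / (k : ℝ)) < ENNReal.ofReal (γ / β) :=
    hGel.eventually_lt_const hlt
  obtain ⟨k, hk1, hk2⟩ := (hev.and (Filter.eventually_ge_atTop 1)).exists
  -- convert to a real norm bound
  have hkpos : (0 : ℝ) < (k : ℝ) := by exact_mod_cast hk2
  have hnorm : ‖B ^ k‖ < (γ / β) ^ k := by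
    have h3 : ((‖B ^ k‖₊ : ℝ≥0∞) ^ (1 / (k : ℝ))) ^ (k : ℝ)
        < (ENNReal.ofReal (γ / β)) ^ (k : ℝ) :=
      ENNReal.rpow_lt_rpow hk1 hkpos
    rw [← ENNReal.rpow_mul, one_div, inv_mul_cancel₀ hkpos.ne', ENNReal.rpow_one] at h3
    rw [ENNReal.rpow_natCast, ← ENNReal.ofReal_pow (by positivity)] at h3
    rw [← ENNReal.ofReal_coe_nnreal, coe_nnnorm] at h3
    exact (ENNReal.ofReal_lt_ofReal_iff (by positivity)).mp h3
  -- complexified vector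
  set v : Fin n → ℂ := fun i => (x i : ℂ) with hv
  have hmap : B ^ k = (A ^ k).map (Complex.ofReal : ℝ → ℂ) := by
    have := map_pow (Complex.ofRealHom.mapMatrix (m := Fin n)) A k
    simp only [RingHom.mapMatrix_apply] at this; exact this.symm
  have hBv : ∀ i, ((B ^ k) *ᵥ v) i = (((A ^ k) *ᵥ x) i : ℂ) := by
    intro i
    simp [hmap, Matrix.mulVec, dotProduct, Matrix.map_apply, hv]
  have hAle : ∀ i, ((A ^ k) *ᵥ x) i ≤ ‖(B ^ k) *ᵥ v‖ := by
    intro i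
    calc ((A ^ k) *ᵥ x) i ≤ |((A ^ k) *ᵥ x) i| := le_abs_self _
      _ = ‖((B ^ k) *ᵥ v) i‖ := by rw [hBv i, Complex.norm_real, Real.norm_eq_abs]
      _ ≤ ‖(B ^ k) *ᵥ v‖ := norm_le_pi_norm _ i
  have hvle : ‖v‖ ≤ ‖x‖ := by
    refine (pi_norm_le_iff_of_nonneg (norm_nonneg x)).mpr fun i => ?_
    rw [hv]; simp only [Complex.norm_real]
    exact norm_le_pi_norm x i
  have hcoef : (β / γ) ^ k * ‖B ^ k‖ < 1 := by
    have h4 : (β / γ) ^ k * ‖B ^ k‖ < (β / γ) ^ k * (γ / β) ^ k :=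
      mul_lt_mul_of_pos_left hnorm (by positivity)
    have h5 : (β / γ) ^ k * (γ / β) ^ k = 1 := by
      rw [← mul_pow]
      field_simp
      exact one_pow k
    linarith
  have hxb : ‖x‖ ≤ ((β / γ) ^ k * ‖B ^ k‖) * ‖x‖ := by
    refine (pi_norm_le_iff_of_nonneg (by positivity)).mpr fun i => ?_
    rw [Real.norm_of_nonneg (hx0 i)]
    calc x i ≤ (β / γ) ^ k * ((A ^ k) *ᵥ x) i := hiter k i
      _ ≤ (β / γ) ^ k * ‖(B ^ k) *ᵥ v‖ :=
          mul_le_mul_of_nonneg_left (hAle i) (by positivity)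
      _ ≤ (β / γ) ^ k * (‖B ^ k‖ * ‖v‖) :=
          mul_le_mul_of_nonneg_left (Matrix.linfty_opNorm_mulVec _ _) (by positivity)
      _ ≤ (β / γ) ^ k * (‖B ^ k‖ * ‖x‖) := by
          have := mul_le_mul_of_nonneg_left hvle (norm_nonneg (B ^ k))
          nlinarith [pow_pos hβγ k]
      _ = ((β / γ) ^ k * ‖B ^ k‖) * ‖x‖ := by ring
  have hxz : ‖x‖ = 0 := by nlinarith [norm_nonneg x]
  exact norm_eq_zero.mp hxz
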